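/- (Z-distance preservation) Let H_X, H_Z define a CSS code, and let H̃_X = [[H_X, 0], [f₁^T, ∂₁^T]], H̃_Z' = [[H_Z, f₀], [0, G]] be the cone code with the gauge-fixed Z-matrix, where f is a chain map (H_Z f₁ = f₀ ∂₁) and G satisfies ker G = im ∂₁. Then every vector v = (v_C, v_A) ∈ ker H̃_X whose restriction v_C to the original qubits lies in the row space of H_Z (i.e., v_C = H_Z^T w₁ for some w₁) lies entirely in the row space of H̃_Z'^T; consequently, the minimum weight of elements of ker H̃_X not in the row space of H̃_Z'^T is at least the Z-distance d_Z of the original code. -/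

import Mathlib

open Matrix

lemma range_transpose_mulVec {g m : ℕ} (G : Matrix (Fin g) (Fin m) (ZMod 2))
    (y : Fin m → ZMod 2)
    (h : ∀ x : Fin m → ZMod 2, G.mulVec x = 0 → dotProduct y x = 0) :
    ∃ u, Gᵀ.mulVec u = y := by
  by_contra hy
  have hy' : y ∉ LinearMap.range Gᵀ.mulVecLin := by
    simpa [Matrix.mulVec_transpose] using hy
  obtain ⟨f, hf1, hf2⟩ := Submodule.exists_dual_map_eq_bot_of_notMem hy'
    (by infer_instance)
  set x : Fin m → ZMod 2 := fun j => f (Pi.single j 1) with hx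
  have hfz : ∀ z : Fin m → ZMod 2, f z = dotProduct z x := by
    intro z
    rw [LinearMap.pi_apply_eq_sum_univ f z]
    simp only [dotProduct, hx, mul_comm]
    refine Finset.sum_congr rfl fun i _ => ?_
    congr 1
    congr 1
    funext j
    simp [Pi.single_apply, eq_comm]
  have hGx : G.mulVec x = 0 := by
    funext i
    have hmem : Gᵀ.mulVec (Pi.single i 1) ∈ LinearMap.range Gᵀ.mulVecLin :=
      ⟨Pi.single i 1, rfl⟩
    have h0 : f (Gᵀ.mulVec (Pi.single i 1)) = 0 := by
      have := hf2 ▸ Submodule.mem_map_of_mem (f := f) hmem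
      simpa using this
    rw [hfz, Matrix.mulVec_transpose, ← Matrix.dotProduct_mulVec,
      single_dotProduct] at h0
    simpa using h0
  exact hf1 (by rw [hfz]; exact h x hGx)

lemma hammingNorm_comp_inl_le {n m : ℕ} (v : Fin n ⊕ Fin m → ZMod 2) :
    hammingNorm (fun j => v (Sum.inl j)) ≤ hammingNorm v := by
  unfold hammingNorm
  apply Finset.card_le_card_of_injOn Sum.inl
  · intro i hi
    simp only [Finset.mem_coe, Finset.mem_filter, Finset.mem_univ, true_and] at *
    exact hi
  · intro a _ b _ hab
    exact Sum.inl_injective hab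

/-- Z-distance preservation for the cone code. With
`H̃_X = [[H_X, 0], [f₁^T, ∂₁^T]]`, `H̃_Z' = [[H_Z, f₀], [0, G]]`,
chain map condition `H_Z f₁ = f₀ ∂₁` and `ker G = im ∂₁`:
(1) every `v ∈ ker H̃_X` whose restriction to the original qubits lies in
the row space of `H_Z` lies in the row space of `H̃_Z'`; consequently
(2) every element of `ker H̃_X` not in the row space of `H̃_Z'` has
Hamming weight at least the Z-distance `d_Z` of the original code. -/
theorem coneCode_Z_distance (n nX nZ w m g dZ : ℕ)
    (HX : Matrix (Fin nX) (Fin n) (ZMod 2))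
    (HZ : Matrix (Fin nZ) (Fin n) (ZMod 2))
    (f1 : Matrix (Fin n) (Fin w) (ZMod 2))
    (f0 : Matrix (Fin nZ) (Fin m) (ZMod 2))
    (D1 : Matrix (Fin m) (Fin w) (ZMod 2))
    (G : Matrix (Fin g) (Fin m) (ZMod 2))
    (hcss : HZ * HXᵀ = 0)
    (hchain : HZ * f1 = f0 * D1)
    (hG : ∀ x : Fin m → ZMod 2, G.mulVec x = 0 ↔ ∃ y, D1.mulVec y = x)
    (hdZ : ∀ x : Fin n → ZMod 2, HX.mulVec x = 0 →
      (∀ w1, x ≠ HZᵀ.mulVec w1) → dZ ≤ hammingNorm x) :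
    (∀ v : Fin n ⊕ Fin m → ZMod 2,
      (Matrix.fromBlocks HX 0 f1ᵀ D1ᵀ).mulVec v = 0 →
      (∃ w1, (fun j => v (Sum.inl j)) = HZᵀ.mulVec w1) →
      ∃ u, v = (Matrix.fromBlocks HZ f0 0 G)ᵀ.mulVec u) ∧
    (∀ v : Fin n ⊕ Fin m → ZMod 2,
      (Matrix.fromBlocks HX 0 f1ᵀ D1ᵀ).mulVec v = 0 →
      (∀ u, v ≠ (Matrix.fromBlocks HZ f0 0 G)ᵀ.mulVec u) →
      dZ ≤ hammingNorm v) := by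
  have key : ∀ v : Fin n ⊕ Fin m → ZMod 2,
      (Matrix.fromBlocks HX 0 f1ᵀ D1ᵀ).mulVec v = 0 →
      (∃ w1, (fun j => v (Sum.inl j)) = HZᵀ.mulVec w1) →
      ∃ u, v = (Matrix.fromBlocks HZ f0 0 G)ᵀ.mulVec u := by
    intro v hker ⟨w1, hw⟩
    rw [Matrix.fromBlocks_mulVec] at hker
    have h2 : f1ᵀ.mulVec (v ∘ Sum.inl) + D1ᵀ.mulVec (v ∘ Sum.inr) = 0 := by
      funext i; exact congrFun hker (Sum.inr i)
    have hw' : (v ∘ Sum.inl) = HZᵀ.mulVec w1 := hw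
    set vA : Fin m → ZMod 2 := v ∘ Sum.inr with hvA
    set y : Fin m → ZMod 2 := vA + f0ᵀ.mulVec w1 with hy
    have e1 : D1ᵀ.mulVec vA = f1ᵀ.mulVec (v ∘ Sum.inl) := by
      funext i
      have := congrFun h2 i
      simp only [Pi.add_apply, Pi.zero_apply] at this
      revert this
      exact (by decide : ∀ a b : ZMod 2, a + b = 0 → b = a) _ _
    have e2 : D1ᵀ.mulVec (f0ᵀ.mulVec w1) = f1ᵀ.mulVec (v ∘ Sum.inl) := by
      rw [hw', Matrix.mulVec_mulVec, Matrix.mulVec_mulVec,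
        ← Matrix.transpose_mul, ← Matrix.transpose_mul, hchain]
    have hD1y : D1ᵀ.mulVec y = 0 := by
      rw [hy, Matrix.mulVec_add, e1, e2]
      funext i
      exact (by decide : ∀ a : ZMod 2, a + a = 0) _
    obtain ⟨u2, hu2⟩ := range_transpose_mulVec G y (by
      intro x hx
      obtain ⟨t, ht⟩ := (hG x).mp hx
      rw [← ht, Matrix.dotProduct_mulVec, ← Matrix.mulVec_transpose, hD1y,
        zero_dotProduct])
    refine ⟨Sum.elim w1 u2, ?_⟩
    have hrhs : (Matrix.fromBlocks HZ f0 0 G)ᵀ.mulVec (Sum.elim w1 u2) =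
        Sum.elim (HZᵀ.mulVec w1) (f0ᵀ.mulVec w1 + Gᵀ.mulVec u2) := by
      rw [Matrix.fromBlocks_transpose, Matrix.fromBlocks_mulVec]
      simp [Sum.elim_comp_inl, Sum.elim_comp_inr]
    rw [hrhs, hu2]
    funext j
    cases j with
    | inl j => exact congrFun hw' j
    | inr j =>
      show vA j = _
      simp only [Sum.elim_inr, Pi.add_apply, hy]
      exact (by decide : ∀ a b : ZMod 2, b = a + (b + a)) _ _
  refine ⟨key, ?_⟩
  intro v hker hnot
  have hHX : HX.mulVec (fun j => v (Sum.inl j)) = 0 := by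
    rw [Matrix.fromBlocks_mulVec] at hker
    funext i
    have := congrFun hker (Sum.inl i)
    simpa [Function.comp_def] using this
  have hnw : ∀ w1, (fun j => v (Sum.inl j)) ≠ HZᵀ.mulVec w1 := by
    intro w1 hcontra
    obtain ⟨u, hu⟩ := key v hker ⟨w1, hcontra⟩
    exact hnot u hu
  calc dZ ≤ hammingNorm (fun j => v (Sum.inl j)) := hdZ _ hHX hnw
    _ ≤ hammingNorm v := hammingNorm_comp_inl_le v
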